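/- Let x be a real number that has a signed digit representation and suppose 1/16 ≤ x. Define the Heron sequence H : ℕ → ℝ by H 0 = 1 and H (n+1) = (H n + x / H n)/2. Then for every natural number n, the real number H n has a signed digit representation. -/

import Mathlib

open Filter Finset

/-- A real number has a signed digit representation if it is the sum of a
series of digits in {-1, 0, 1} weighted by powers of 1/2. -/
def HasSDR (x : ℝ) : Prop :=
  ∃ d : ℕ → ℤ, (∀ i, d i = -1 ∨ d i = 0 ∨ d i = 1) ∧
    x = ∑' i : ℕ, (d i : ℝ) / 2 ^ (i + 1)

lemma geom_half_sum : ∑' i : ℕ, (1:ℝ) / 2 ^ (i + 1) = 1 := by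
  rw [show (fun i : ℕ => (1:ℝ)/2^(i+1)) = fun i : ℕ => (1/2:ℝ)/2^i from
    funext fun i => by rw [pow_succ]; ring]
  exact tsum_geometric_two' 1

lemma sdr_summable (d : ℕ → ℤ) (hd : ∀ i, d i = -1 ∨ d i = 0 ∨ d i = 1) :
    Summable (fun i => (d i : ℝ) / 2 ^ (i + 1)) := by
  apply Summable.of_norm_bounded (g := fun i => (1/2 : ℝ) ^ i)
    (summable_geometric_of_lt_one (by norm_num) (by norm_num))
  intro i
  have hdi : |(d i : ℝ)| ≤ 1 := by rcases hd i with h | h | h <;> simp [h]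
  have h2 : (0:ℝ) < 2 ^ (i+1) := by positivity
  have hone : (1/2:ℝ)^i * 2^i = 1 := by
    rw [div_pow, one_pow, div_mul_cancel₀]; positivity
  rw [Real.norm_eq_abs, abs_div, abs_of_pos h2, div_le_iff₀ h2]
  calc |(d i : ℝ)| ≤ 1 := hdi
    _ ≤ (1/2)^i * 2^(i+1) := by rw [pow_succ, ← mul_assoc, hone]; norm_num

lemma sdr_le_one (x : ℝ) (hx : HasSDR x) : x ≤ 1 := by
  obtain ⟨d, hd, hx⟩ := hx
  rw [hx, ← geom_half_sum]
  apply Summable.tsum_le_tsum _ (sdr_summable d hd)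
  · exact (sdr_summable (fun _ => 1) (fun _ => Or.inr (Or.inr rfl))).congr (by simp)
  · intro i
    have hdi : (d i : ℝ) ≤ 1 := by rcases hd i with h | h | h <;> simp [h]
    have h2 : (0:ℝ) < 2 ^ (i+1) := by positivity
    exact div_le_div_of_nonneg_right hdi h2.le

lemma floor_double (a : ℝ) : ⌊2*a⌋ = 2*⌊a⌋ ∨ ⌊2*a⌋ = 2*⌊a⌋+1 := by
  have h1 : (2*⌊a⌋ : ℤ) ≤ ⌊2*a⌋ := by
    rw [Int.le_floor]; push_cast
    have := Int.floor_le a; linarith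
  have h2 : ⌊2*a⌋ < 2*⌊a⌋ + 2 := by
    rw [Int.floor_lt]; push_cast
    have := Int.lt_floor_add_one a; linarith
  omega

lemma hasSDR_of_mem (y : ℝ) (h0 : 0 ≤ y) (h1 : y ≤ 1) : HasSDR y := by
  rcases eq_or_lt_of_le h1 with rfl | h1
  · exact ⟨fun _ => 1, fun i => Or.inr (Or.inr rfl), by simpa using geom_half_sum.symm⟩
  · have hfl : ⌊y⌋ = 0 := Int.floor_eq_zero_iff.mpr ⟨h0, h1⟩
    set d : ℕ → ℤ := fun i => ⌊y*2^(i+1)⌋ - 2*⌊y*2^i⌋ with hd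
    have hdig : ∀ i, d i = 0 ∨ d i = 1 := by
      intro i
      have h := floor_double (y*2^i)
      have heq : 2*(y*2^i) = y*2^(i+1) := by ring
      rw [heq] at h
      simp only [hd]
      omega
    have hsum : Summable (fun i => (d i:ℝ)/2^(i+1)) :=
      sdr_summable d (fun i => Or.inr (hdig i))
    have hpartial : ∀ n, ∑ i ∈ Finset.range n, (d i:ℝ)/2^(i+1) = (⌊y*2^n⌋:ℝ)/2^n := by
      intro n; induction n with
      | zero => simp [hfl]
      | succ n ih =>
        rw [Finset.sum_range_succ, ih]
        simp only [hd]
        push_cast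
        field_simp
        ring
    refine ⟨d, fun i => Or.inr (hdig i), ?_⟩
    have hlim : Tendsto (fun n => (⌊y*2^n⌋:ℝ)/2^n) atTop (nhds y) := by
      have hz : Tendsto (fun n => (⌊y*2^n⌋:ℝ)/2^n - y) atTop (nhds 0) := by
        refine squeeze_zero_norm (fun n => ?_)
          (tendsto_pow_atTop_nhds_zero_of_lt_one (by norm_num) (by norm_num)
            : Tendsto (fun n => (1/2:ℝ)^n) atTop (nhds 0))
        have h2 : (0:ℝ) < 2 ^ n := by positivity
        have hle := Int.floor_le (y*2^n)
        have hlt := Int.lt_floor_add_one (y*2^n)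
        have hpow : (1/2:ℝ)^n = 1/2^n := by rw [div_pow, one_pow]
        have hone : (1/2^n:ℝ)*2^n = 1 := by field_simp
        rw [Real.norm_eq_abs, abs_le, hpow]
        constructor
        · have : y - 1/2^n ≤ (⌊y*2^n⌋:ℝ)/2^n := by
            rw [le_div_iff₀ h2]; nlinarith
          linarith
        · have h3 : (⌊y*2^n⌋:ℝ)/2^n ≤ y := by rw [div_le_iff₀ h2]; exact hle
          have h4 : (0:ℝ) ≤ 1/2^n := by positivity
          linarith
      have h' := hz.add_const y
      simpa using h'
    have hps := hsum.hasSum.tendsto_sum_nat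
    rw [show (fun n => ∑ i ∈ Finset.range n, (d i:ℝ)/2^(i+1))
        = (fun n => (⌊y*2^n⌋:ℝ)/2^n) from funext hpartial] at hps
    exact (tendsto_nhds_unique hps hlim).symm

theorem heron_sdr (x : ℝ) (hx : HasSDR x) (hlb : 1 / 16 ≤ x) (H : ℕ → ℝ)
    (hH0 : H 0 = 1) (hHs : ∀ n, H (n + 1) = (H n + x / H n) / 2) :
    ∀ n : ℕ, HasSDR (H n) := by
  have hx1 : x ≤ 1 := sdr_le_one x hx
  have hx0 : (0:ℝ) < x := lt_of_lt_of_le (by norm_num) hlb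
  have hsx : Real.sqrt x ≤ 1 := by
    rw [show (1:ℝ) = Real.sqrt 1 from (Real.sqrt_one).symm]
    exact Real.sqrt_le_sqrt hx1
  have hsx0 : 0 < Real.sqrt x := Real.sqrt_pos.mpr hx0
  have hsq : Real.sqrt x ^ 2 = x := Real.sq_sqrt hx0.le
  have key : ∀ n, Real.sqrt x ≤ H n ∧ H n ≤ 1 := by
    intro n; induction n with
    | zero => rw [hH0]; exact ⟨hsx, le_refl 1⟩
    | succ n ih =>
      obtain ⟨hl, hr⟩ := ih
      have hpos : 0 < H n := lt_of_lt_of_le hsx0 hl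
      rw [hHs n]
      constructor
      · rw [le_div_iff₀ (by norm_num), ← sub_nonneg]
        have h1 : x / H n * H n = x := div_mul_cancel₀ x hpos.ne'
        nlinarith [sq_nonneg (H n - Real.sqrt x), mul_pos hpos hpos]
      · have hxH : x ≤ H n := by nlinarith
        have : x / H n ≤ 1 := (div_le_one hpos).mpr hxH
        linarith
  intro n
  exact hasSDR_of_mem (H n) (le_trans hsx0.le (key n).1) (key n).2
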